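/- For every ε > 0 and every pair of real I×I upper triangular matrices R₁, R₂ sharing a common zero diagonal entry, there exist upper triangular matrices H₁, H₂ with ‖R₁ − H₁‖ + ‖R₂ − H₂‖ < ε such that H₁ is nonsingular and H₂H₁⁻¹ has all I eigenvalues real with at least two of them equal. -/

import Mathlib

open Matrix Polynomial

noncomputable def frobNorm {I : ℕ} (A : Matrix (Fin I) (Fin I) ℝ) : ℝ :=
  Real.sqrt (∑ i : Fin I, ∑ j : Fin I, (A i j) ^ 2)

lemma diag_mul_tri {n : ℕ} (A B : Matrix (Fin n) (Fin n) ℝ)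
    (hA : A.BlockTriangular id) (hB : B.BlockTriangular id) (k : Fin n) :
    (A * B) k k = A k k * B k k := by
  rw [Matrix.mul_apply]
  apply Finset.sum_eq_single
  · intro j _ hj
    rcases lt_or_gt_of_ne hj with h | h
    · rw [hA (show (id j : Fin n) < id k from h), zero_mul]
    · rw [hB (show (id k : Fin n) < id j from h), mul_zero]
  · intro h; exact absurd (Finset.mem_univ k) h

lemma frob_diag {n : ℕ} (f : Fin n → ℝ) :
    frobNorm (Matrix.diagonal f) = Real.sqrt (∑ i : Fin n, f i ^ 2) := by
  unfold frobNorm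
  congr 1
  refine Finset.sum_congr rfl fun i _ => ?_
  rw [Finset.sum_eq_single i]
  · simp
  · intro j _ hj
    simp [Matrix.diagonal_apply_ne' _ hj]
  · intro h; exact absurd (Finset.mem_univ i) h

theorem stmt7 (I : ℕ) (hI : 2 ≤ I) (R₁ R₂ : Matrix (Fin I) (Fin I) ℝ)
    (h₁ : R₁.BlockTriangular id) (h₂ : R₂.BlockTriangular id)
    (hzero : ∃ i : Fin I, R₁ i i = 0 ∧ R₂ i i = 0)
    (ε : ℝ) (hε : 0 < ε) :
    ∃ H₁ H₂ : Matrix (Fin I) (Fin I) ℝ,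
      H₁.BlockTriangular id ∧ H₂.BlockTriangular id ∧
      frobNorm (R₁ - H₁) + frobNorm (R₂ - H₂) < ε ∧
      IsUnit H₁.det ∧
      ∃ d : Fin I → ℝ,
        (H₂ * H₁⁻¹).charpoly = ∏ i : Fin I, (X - C (d i)) ∧
        ∃ i j : Fin I, i ≠ j ∧ d i = d j := by
  classical
  obtain ⟨i₀, hR1z, hR2z⟩ := hzero
  have hcard : 1 < Fintype.card (Fin I) := by simpa using lt_of_lt_of_le one_lt_two hI
  obtain ⟨j₀, hj₀⟩ := Fintype.exists_ne_of_one_lt_card hcard i₀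
  -- constants
  set C : ℝ := |R₁ j₀ j₀| + |R₂ j₀ j₀| + 1 with hC
  have hC1 : 1 ≤ C := by rw [hC]; nlinarith [abs_nonneg (R₁ j₀ j₀), abs_nonneg (R₂ j₀ j₀)]
  have hCpos : 0 < C := lt_of_lt_of_le one_pos hC1
  have hsI : (0:ℝ) ≤ Real.sqrt I := Real.sqrt_nonneg _
  have hDen : 0 < 2 * C * (Real.sqrt I + 1) := by positivity
  set δ : ℝ := min 1 (ε / (2 * C * (Real.sqrt I + 1))) with hδdef
  have hδpos : 0 < δ := lt_min one_pos (div_pos hε hDen)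
  have hδ1 : δ ≤ 1 := min_le_left _ _
  have hδε : δ ≤ ε / (2 * C * (Real.sqrt I + 1)) := min_le_right _ _
  have hδne : δ ≠ 0 := ne_of_gt hδpos
  -- diagonal entries
  set b : Fin I → ℝ := fun k => if R₁ k k = 0 then δ else R₁ k k with hb
  have hbne : ∀ k, b k ≠ 0 := by
    intro k; simp only [hb]; split <;> [exact hδne; assumption]
  have hbj : |b j₀| ≤ C := by
    simp only [hb]
    split
    · calc |δ| = δ := abs_of_pos hδpos
        _ ≤ 1 := hδ1
        _ ≤ C := hC1
    · rw [hC]; nlinarith [abs_nonneg (R₂ j₀ j₀)]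
  set a : Fin I → ℝ := fun k => if k = i₀ then δ * b j₀ else b k with ha
  have hane : ∀ k, a k ≠ 0 := by
    intro k; simp only [ha]; split
    · exact mul_ne_zero hδne (hbne j₀)
    · exact hbne k
  set f : Fin I → ℝ := fun k => a k - R₁ k k with hf
  set g : Fin I → ℝ := fun k => if k = i₀ then δ * R₂ j₀ j₀ else 0 with hg
  have hfbd : ∀ k, |f k| ≤ δ * C := by
    intro k
    simp only [hf, ha]
    by_cases hk : k = i₀
    · subst hk
      rw [if_pos rfl, hR1z, sub_zero, abs_mul, abs_of_pos hδpos]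
      exact mul_le_mul_of_nonneg_left hbj hδpos.le
    · simp only [if_neg hk, hb]
      split
      · next h => rw [h, sub_zero, abs_of_pos hδpos]; nlinarith
      · simp only [sub_self, abs_zero]; positivity
  -- matrices
  set H₁ : Matrix (Fin I) (Fin I) ℝ := R₁ + Matrix.diagonal f with hH₁
  set H₂ : Matrix (Fin I) (Fin I) ℝ := R₂ + Matrix.diagonal g with hH₂
  have hH₁tri : H₁.BlockTriangular id := h₁.add (Matrix.blockTriangular_diagonal f)
  have hH₂tri : H₂.BlockTriangular id := h₂.add (Matrix.blockTriangular_diagonal g)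
  have hH₁diag : ∀ k, H₁ k k = a k := by
    intro k
    simp [hH₁, hf, Matrix.diagonal_apply_eq]
  have hH₂diag : ∀ k, H₂ k k = R₂ k k + g k := by
    intro k; simp [hH₂]
  -- determinant
  have hdet : IsUnit H₁.det := by
    rw [Matrix.det_of_upperTriangular hH₁tri, isUnit_iff_ne_zero]
    exact Finset.prod_ne_zero_iff.2 fun k _ => (hH₁diag k) ▸ hane k
  -- norms
  have frob1 : frobNorm (R₁ - H₁) ≤ Real.sqrt I * (δ * C) := by
    have : R₁ - H₁ = Matrix.diagonal (fun k => -f k) := by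
      rw [hH₁]; ext i j
      by_cases h : i = j
      · subst h; simp [Matrix.diagonal_apply_eq]
      · simp [Matrix.diagonal_apply_ne _ h]
    rw [this, frob_diag]
    have hsum : ∑ i : Fin I, (-f i) ^ 2 ≤ I * (δ * C) ^ 2 := by
      calc ∑ i : Fin I, (-f i) ^ 2 ≤ ∑ _i : Fin I, (δ * C) ^ 2 := by
            refine Finset.sum_le_sum fun i _ => ?_
            rw [neg_sq]
            exact sq_le_sq' (neg_le_of_abs_le (hfbd i)) (le_of_abs_le (hfbd i))
        _ = I * (δ * C) ^ 2 := by simp [Finset.sum_const]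
    calc Real.sqrt (∑ i : Fin I, (-f i) ^ 2) ≤ Real.sqrt (I * (δ * C) ^ 2) :=
          Real.sqrt_le_sqrt hsum
      _ = Real.sqrt I * (δ * C) := by
          rw [Real.sqrt_mul (Nat.cast_nonneg I), Real.sqrt_sq (by positivity)]
  have frob2 : frobNorm (R₂ - H₂) ≤ δ * C := by
    have : R₂ - H₂ = Matrix.diagonal (fun k => -g k) := by
      rw [hH₂]; ext i j
      by_cases h : i = j
      · subst h; simp [Matrix.diagonal_apply_eq]
      · simp [Matrix.diagonal_apply_ne _ h]
    rw [this, frob_diag]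
    have hsum : ∑ i : Fin I, (-g i) ^ 2 = (δ * R₂ j₀ j₀) ^ 2 := by
      rw [Finset.sum_eq_single i₀]
      · simp [hg]
      · intro j _ hj; simp [hg, if_neg hj]
      · intro h; exact absurd (Finset.mem_univ i₀) h
    rw [hsum, Real.sqrt_sq_eq_abs, abs_mul, abs_of_pos hδpos]
    have : |R₂ j₀ j₀| ≤ C := by rw [hC]; nlinarith [abs_nonneg (R₁ j₀ j₀)]
    exact mul_le_mul_of_nonneg_left this hδpos.le
  have hnorm : frobNorm (R₁ - H₁) + frobNorm (R₂ - H₂) < ε := by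
    have key : δ * (2 * C * (Real.sqrt I + 1)) ≤ ε := by
      rw [← le_div_iff₀ hDen]; exact hδε
    nlinarith [frob1, frob2, mul_pos hδpos hCpos]
  -- invertibility and charpoly
  haveI : Invertible H₁ := H₁.invertibleOfIsUnitDet hdet
  have hinvtri : H₁⁻¹.BlockTriangular id :=
    Matrix.blockTriangular_inv_of_blockTriangular hH₁tri
  have hprodtri : (H₂ * H₁⁻¹).BlockTriangular id := hH₂tri.mul hinvtri
  have hinvdiag : ∀ k, H₁⁻¹ k k = (a k)⁻¹ := by
    intro k
    have h1 : (H₁⁻¹ * H₁) k k = 1 := by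
      rw [Matrix.nonsing_inv_mul _ hdet]; simp [Matrix.one_apply]
    rw [diag_mul_tri _ _ hinvtri hH₁tri] at h1
    rw [hH₁diag] at h1
    exact eq_inv_of_mul_eq_one_left h1
  refine ⟨H₁, H₂, hH₁tri, hH₂tri, hnorm, hdet,
    fun k => (H₂ * H₁⁻¹) k k, Matrix.charpoly_of_upperTriangular _ hprodtri,
    i₀, j₀, (Ne.symm hj₀), ?_⟩
  show (H₂ * H₁⁻¹) i₀ i₀ = (H₂ * H₁⁻¹) j₀ j₀
  rw [diag_mul_tri _ _ hH₂tri hinvtri, diag_mul_tri _ _ hH₂tri hinvtri,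
    hinvdiag, hinvdiag, hH₂diag, hH₂diag]
  simp only [hg, ha, if_pos rfl, if_neg hj₀, hR2z, zero_add, add_zero]
  rw [mul_inv]
  field_simp [hδne, hbne j₀]
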